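/- f(t)/t → 1 as t → ∞; in particular the warping function f grows asymptotically linearly, which is the reason the rescaled metrics R²·g_{f,h} converge to the cone C(M,g) as R → 0. -/

import Mathlib

open Filter Real Set

/-- `f(t)/t → 1` as `t → ∞`: the warping function grows asymptotically linearly. -/
theorem shaYang_asymptotically_linear (α : ℝ) (hα : 0 < α) (f : ℝ → ℝ)
    (hf : ContDiff ℝ 2 f) (hf0 : f 0 = 1) (hf'0 : deriv f 0 = 0)
    (hfpos : ∀ t ≥ (0 : ℝ), 0 < f t)
    (hode : ∀ t ≥ (0 : ℝ), deriv (deriv f) t = (α / 2) * (f t) ^ (-α - 1)) :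
    Filter.Tendsto (fun t => f t / t) Filter.atTop (nhds 1) := by
  have hdf : Differentiable ℝ f := hf.differentiable (by norm_num)
  have h21 : (2 : WithTop ℕ∞) = 1 + 1 := by norm_num
  have hcd1 : ContDiff ℝ 1 (deriv f) := by
    have := (contDiff_succ_iff_deriv.mp (h21 ▸ hf)).2.2
    exact this
  have hddf : Differentiable ℝ (deriv f) := hcd1.differentiable (by norm_num)
  have hD1 : ∀ t, HasDerivAt f (deriv f t) t := fun t => (hdf t).hasDerivAt
  have hD2 : ∀ t, HasDerivAt (deriv f) (deriv (deriv f) t) t := fun t => (hddf t).hasDerivAt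
  -- f'' > 0 on [0,∞)
  have hf''pos : ∀ t ≥ (0:ℝ), 0 < deriv (deriv f) t := by
    intro t ht
    rw [hode t ht]
    exact mul_pos (by linarith) (Real.rpow_pos_of_pos (hfpos t ht) _)
  -- f' strictly increasing on [0,∞)
  have hmono' : StrictMonoOn (deriv f) (Set.Ici 0) :=
    strictMonoOn_of_deriv_pos (convex_Ici 0) hddf.continuous.continuousOn
      (fun x hx => hf''pos x (le_of_lt (by simpa [interior_Ici] using hx)))
  have hf'nonneg : ∀ t ≥ (0:ℝ), 0 ≤ deriv f t := by
    intro t ht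
    rcases eq_or_lt_of_le ht with h | h
    · rw [← h, hf'0]
    · have := hmono' Set.self_mem_Ici (le_of_lt h) h
      rw [hf'0] at this; linarith
  -- Energy identity: (f')² + f^(-α) = 1 on [0,∞)
  set E : ℝ → ℝ := fun t => (deriv f t) ^ 2 + (f t) ^ (-α) with hE_def
  have hEderiv : ∀ t ≥ (0:ℝ), HasDerivAt E 0 t := by
    intro t ht
    have h1 : HasDerivAt (fun s => (deriv f s) ^ 2)
        ((2 : ℕ) * (deriv f t) ^ (2 - 1) * deriv (deriv f) t) t := (hD2 t).pow 2
    have h2 : HasDerivAt (fun s => (f s) ^ (-α))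
        (deriv f t * (-α) * (f t) ^ (-α - 1)) t :=
      (hD1 t).rpow_const (Or.inl (ne_of_gt (hfpos t ht)))
    have := h1.add h2
    refine this.congr_deriv ?_
    rw [hode t ht]
    push_cast
    ring
  have hE1 : ∀ t ≥ (0:ℝ), E t = 1 := by
    intro t ht
    have hcont : ContinuousOn E (Set.Icc 0 t) :=
      fun x hx => ((hEderiv x hx.1).continuousAt).continuousWithinAt
    have hder : ∀ x ∈ Set.Ico (0:ℝ) t, HasDerivWithinAt E 0 (Set.Ici x) x :=
      fun x hx => (hEderiv x hx.1).hasDerivWithinAt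
    have := constant_of_has_deriv_right_zero hcont hder t (Set.right_mem_Icc.mpr ht)
    rw [this, hE_def]
    simp [hf'0, hf0]
  -- f' ≤ 1 on [0,∞)
  have hf'le1 : ∀ t ≥ (0:ℝ), deriv f t ≤ 1 := by
    intro t ht
    have h := hE1 t ht
    have hr : 0 < (f t) ^ (-α) := Real.rpow_pos_of_pos (hfpos t ht) _
    have hsq : (deriv f t) ^ 2 ≤ 1 := by simp only [hE_def] at h; linarith
    nlinarith [hf'nonneg t ht]
  -- f t ≤ 1 + t on [0,∞)
  have hupper : ∀ t ≥ (0:ℝ), f t ≤ 1 + t := by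
    intro t ht
    set g : ℝ → ℝ := fun s => 1 + s - f s with hg_def
    have hgd : ∀ s, HasDerivAt g (1 - deriv f s) s := by
      intro s
      exact (((hasDerivAt_id s).const_add 1).sub (hD1 s)).congr_deriv (by simp)
    have hgmono : MonotoneOn g (Set.Ici 0) := by
      apply monotoneOn_of_deriv_nonneg (convex_Ici 0)
        (fun x _ => (hgd x).continuousAt.continuousWithinAt)
        (fun x hx => ((hgd x).differentiableAt).differentiableWithinAt)
      intro x hx
      rw [(hgd x).deriv]
      have : (0:ℝ) ≤ x := le_of_lt (by simpa [interior_Ici] using hx)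
      linarith [hf'le1 x this]
    have := hgmono Set.self_mem_Ici ht ht
    simp only [hg_def, hf0] at this
    linarith
  -- lower bound: for 0 ≤ T ≤ t, f t ≥ f T + f' T * (t - T)
  have hlower : ∀ T ≥ (0:ℝ), ∀ t ≥ T, f T + deriv f T * (t - T) ≤ f t := by
    intro T hT t ht
    set g : ℝ → ℝ := fun s => f s - deriv f T * s with hg_def
    have hgd : ∀ s, HasDerivAt g (deriv f s - deriv f T) s := fun s => by
      exact ((hD1 s).sub ((hasDerivAt_id s).const_mul (deriv f T))).congr_deriv (by simp)
    have hgmono : MonotoneOn g (Set.Ici T) := by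
      apply monotoneOn_of_deriv_nonneg (convex_Ici T)
        (fun x _ => (hgd x).continuousAt.continuousWithinAt)
        (fun x hx => ((hgd x).differentiableAt).differentiableWithinAt)
      intro x hx
      rw [(hgd x).deriv]
      have hx' : T < x := by simpa [interior_Ici] using hx
      have := hmono'.monotoneOn (Set.mem_Ici.mpr hT) (Set.mem_Ici.mpr (hT.trans hx'.le))
        hx'.le
      linarith
    have := hgmono Set.self_mem_Ici ht ht
    simp only [hg_def] at this
    linarith
  -- f → ∞
  have hftop : Tendsto f atTop atTop := by
    have h1 : (0:ℝ) < deriv f 1 := by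
      have := hmono' Set.self_mem_Ici (by norm_num : (1:ℝ) ∈ Set.Ici 0) one_pos
      rw [hf'0] at this; exact this
    have hg : Tendsto (fun t => f 1 + deriv f 1 * (t - 1)) atTop atTop := by
      apply tendsto_atTop_add_const_left
      exact (tendsto_atTop_add_const_right _ _ tendsto_id).const_mul_atTop h1
    apply tendsto_atTop_mono' atTop _ hg
    filter_upwards [eventually_ge_atTop (1:ℝ)] with t ht
    exact hlower 1 zero_le_one t ht
  -- f^(-α) → 0, hence f' → 1
  have hrpow0 : Tendsto (fun t => (f t) ^ (-α)) atTop (nhds 0) :=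
    (tendsto_rpow_neg_atTop hα).comp hftop
  have hf'lim : Tendsto (deriv f) atTop (nhds 1) := by
    have hsq : Tendsto (fun t => Real.sqrt (1 - (f t) ^ (-α))) atTop (nhds 1) := by
      have := (tendsto_const_nhds (x := (1:ℝ)) (f := atTop)).sub hrpow0
      simpa using this.sqrt
    apply hsq.congr'
    filter_upwards [eventually_ge_atTop (0:ℝ)] with t ht
    have h := hE1 t ht
    simp only [hE_def] at h
    have : 1 - (f t) ^ (-α) = (deriv f t) ^ 2 := by linarith
    rw [this, Real.sqrt_sq (hf'nonneg t ht)]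
  -- final squeeze
  rw [Metric.tendsto_atTop]
  intro ε hε
  have hev : ∀ᶠ T in atTop, 1 - ε / 2 < deriv f T :=
    hf'lim.eventually (eventually_gt_nhds (by linarith))
  obtain ⟨T, hT0, hTε⟩ := ((eventually_ge_atTop (0:ℝ)).and hev).exists
  refine ⟨max T (max (2 / ε) (2 * T / ε)), fun t ht => ?_⟩
  have htT : T ≤ t := le_trans (le_max_left _ _) ht
  have ht2ε : 2 / ε ≤ t := le_trans (le_trans (le_max_left _ _) (le_max_right _ _)) ht
  have htTε : 2 * T / ε ≤ t := le_trans (le_trans (le_max_right _ _) (le_max_right _ _)) ht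
  have ht0 : 0 < t := lt_of_lt_of_le (by positivity) ht2ε
  have h2εt : 2 ≤ ε * t := by rw [div_le_iff₀ hε] at ht2ε; linarith
  have h2Tεt : 2 * T ≤ ε * t := by rw [div_le_iff₀ hε] at htTε; linarith
  rw [Real.dist_eq, abs_sub_lt_iff]
  constructor
  · -- f t / t - 1 < ε
    have h1 : f t ≤ 1 + t := hupper t (hT0.trans htT)
    rw [div_sub' (ne_of_gt ht0), div_lt_iff₀ ht0]
    nlinarith
  · -- 1 - f t / t < ε
    have h2 : f T + deriv f T * (t - T) ≤ f t := hlower T hT0 t htT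
    have hfT : 0 < f T := hfpos T hT0
    have hd1 : deriv f T ≤ 1 := hf'le1 T hT0
    have hdT : deriv f T * T ≤ T := by nlinarith [hf'nonneg T hT0]
    have hdt : (1 - ε / 2) * t < deriv f T * t := by
      apply mul_lt_mul_of_pos_right hTε ht0
    rw [sub_lt_comm, lt_div_iff₀ ht0]
    nlinarith
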